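/- (Monopole conservation equation, inertial frame.) For every i, the function u ↦ k_j 𝒯^{ij}(u) (sum over j, with k_j = η_{jl}k^l = (−1, n̂)) is constant; equivalently k_j (d/du)𝒯^{ij}(u) = 0 for all u. -/

import Mathlib

open scoped BigOperators

noncomputable section

/-- The Minkowski metric η = diag(−1,1,1,1) on ℝ⁴. -/
def eta (i j : Fin 4) : ℝ := if i = j then (if i = 0 then -1 else 1) else 0

/-- Minkowski inner product a·b = η_{ij} a^i b^j. -/
def mdot (a b : Fin 4 → ℝ) : ℝ := ∑ i, ∑ j, eta i j * a i * b j

/-- Lowering an index with η : k_i = η_{ij} k^j. -/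
def lo (a : Fin 4 → ℝ) (i : Fin 4) : ℝ := ∑ j, eta i j * a j

open MeasureTheory Metric

/-- The point of the null hyperplane `P_u = {y : y⁰ = u + n̂·𝐲}` over the
spatial point `𝐲`. -/
def nullPt (n : EuclideanSpace ℝ (Fin 3)) (u : ℝ) (y : EuclideanSpace ℝ (Fin 3)) :
    Fin 4 → ℝ :=
  ![u + ∑ α, n α * y α, y 0, y 1, y 2]

/-- The null vector `k = (1, n̂)`. -/
def kvec (n : EuclideanSpace ℝ (Fin 3)) : Fin 4 → ℝ := ![1, n 0, n 1, n 2]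

/-- The retarded monopole moment `𝒯^{ij}(u) = ∫_{P_u} T^{ij}`. -/
def monopole (T : Fin 4 → Fin 4 → (Fin 4 → ℝ) → ℝ)
    (n : EuclideanSpace ℝ (Fin 3)) (i j : Fin 4) (u : ℝ) : ℝ :=
  ∫ y : EuclideanSpace ℝ (Fin 3), T i j (nullPt n u y)

namespace MonopoleProof

abbrev E3 := EuclideanSpace ℝ (Fin 3)

def L (n : E3) : E3 →L[ℝ] (Fin 4 → ℝ) :=
  ContinuousLinearMap.pi
    ![∑ α : Fin 3, n α • (EuclideanSpace.proj α : E3 →L[ℝ] ℝ),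
      EuclideanSpace.proj 0, EuclideanSpace.proj 1, EuclideanSpace.proj 2]

lemma nullPt_eq (n : E3) (u : ℝ) (y : E3) :
    nullPt n u y = ![u, 0, 0, 0] + L n y := by
  funext i
  fin_cases i <;>
    simp [nullPt, L, ContinuousLinearMap.pi_apply, ContinuousLinearMap.sum_apply,
      PiLp.proj_apply, mul_comm]

lemma hasFDerivAt_nullPt (n : E3) (u : ℝ) (y : E3) :
    HasFDerivAt (fun y => nullPt n u y) (L n) y := by
  have h : (fun y : E3 => nullPt n u y) = fun y => ![u, 0, 0, 0] + L n y := by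
    funext y; exact nullPt_eq n u y
  rw [h]
  exact (L n).hasFDerivAt.const_add _

lemma continuous_nullPt (n : E3) (u : ℝ) : Continuous (fun y : E3 => nullPt n u y) := by
  have h : (fun y : E3 => nullPt n u y) = fun y => ![u, 0, 0, 0] + L n y := by
    funext y; exact nullPt_eq n u y
  rw [h]; exact continuous_const.add (L n).continuous

lemma contDiff_nullPt (n : E3) (u : ℝ) : ContDiff ℝ (⊤ : ℕ∞) (fun y : E3 => nullPt n u y) := by
  have h : (fun y : E3 => nullPt n u y) = fun y => ![u, 0, 0, 0] + L n y := by
    funext y; exact nullPt_eq n u y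
  rw [h]; exact contDiff_const.add (L n).contDiff

lemma nullPt_eq_u (n : E3) (y : E3) :
    (fun u => nullPt n u y) = (fun u : ℝ => nullPt n 0 y + u • (Pi.single 0 1 : Fin 4 → ℝ)) := by
  funext u; funext i
  fin_cases i <;> simp [nullPt, Pi.single_apply] <;> ring

lemma hasDerivAt_nullPt_u (n : E3) (y : E3) (u : ℝ) :
    HasDerivAt (fun u => nullPt n u y) ((Pi.single 0 1 : Fin 4 → ℝ)) u := by
  rw [nullPt_eq_u]
  simpa using ((hasDerivAt_id u).smul_const ((Pi.single 0 1 : Fin 4 → ℝ))).const_add (nullPt n 0 y)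

lemma L_single (n : E3) (α : Fin 3) :
    L n (EuclideanSpace.single α (1:ℝ))
      = n α • (Pi.single 0 1 : Fin 4 → ℝ) + (Pi.single α.succ 1 : Fin 4 → ℝ) := by
  fin_cases α <;> (funext i; fin_cases i) <;>
    simp [L, ContinuousLinearMap.pi_apply, ContinuousLinearMap.sum_apply,
      PiLp.proj_apply, EuclideanSpace.single_apply, Pi.single_apply,
      Fin.sum_univ_three, Fin.succ]

lemma sq_sum (y : E3) : (y 0) ^ 2 + (y 1) ^ 2 + (y 2) ^ 2 = ‖y‖ ^ 2 := by
  rw [EuclideanSpace.norm_eq, Real.sq_sqrt (by positivity)]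
  simp [Fin.sum_univ_three, sq_abs]

lemma inner_bound (n y : E3) : |∑ α, n α * y α| ≤ ‖n‖ * ‖y‖ := by
  have h := abs_real_inner_le_norm n y
  simpa [PiLp.inner_apply, RCLike.inner_apply, conj_trivial, mul_comm] using h


variable {T : Fin 4 → Fin 4 → (Fin 4 → ℝ) → ℝ} {R : ℝ} {n : E3}

lemma T_nullPt_zero (hsupp : ∀ i j (y : Fin 4 → ℝ),
      R ^ 2 ≤ (y 1) ^ 2 + (y 2) ^ 2 + (y 3) ^ 2 → T i j y = 0)
    (hR : 0 ≤ R) (i j : Fin 4) (u : ℝ) {y : E3} (hy : R ≤ ‖y‖) :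
    T i j (nullPt n u y) = 0 := by
  apply hsupp
  have h1 : nullPt n u y 1 = y 0 := by simp [nullPt]
  have h2 : nullPt n u y 2 = y 1 := by simp [nullPt]
  have h3 : nullPt n u y 3 = y 2 := by simp [nullPt]
  rw [h1, h2, h3, sq_sum]
  exact pow_le_pow_left₀ hR hy 2

lemma fderiv_nullPt_zero (hsupp : ∀ i j (y : Fin 4 → ℝ),
      R ^ 2 ≤ (y 1) ^ 2 + (y 2) ^ 2 + (y 3) ^ 2 → T i j y = 0)
    (hR : 0 ≤ R) (i j : Fin 4) (u : ℝ) {y : E3} (hy : R < ‖y‖) :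
    fderiv ℝ (T i j) (nullPt n u y) = 0 := by
  have hopen : IsOpen {x : Fin 4 → ℝ | R ^ 2 < (x 1) ^ 2 + (x 2) ^ 2 + (x 3) ^ 2} := by
    have hc : Continuous fun x : Fin 4 → ℝ => (x 1) ^ 2 + (x 2) ^ 2 + (x 3) ^ 2 := by
      continuity
    exact isOpen_lt continuous_const hc
  have hmem : nullPt n u y ∈ {x : Fin 4 → ℝ | R ^ 2 < (x 1) ^ 2 + (x 2) ^ 2 + (x 3) ^ 2} := by
    have h1 : nullPt n u y 1 = y 0 := by simp [nullPt]
    have h2 : nullPt n u y 2 = y 1 := by simp [nullPt]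
    have h3 : nullPt n u y 3 = y 2 := by simp [nullPt]
    simp only [Set.mem_setOf_eq, h1, h2, h3]
    rw [sq_sum]
    exact pow_lt_pow_left₀ hy hR (by norm_num)
  have heq : T i j =ᶠ[nhds (nullPt n u y)] fun _ => (0:ℝ) :=
    Filter.eventuallyEq_of_mem (hopen.mem_nhds hmem) (fun x hx => hsupp i j x (le_of_lt hx))
  rw [heq.fderiv_eq]
  exact fderiv_const_apply 0

lemma hcsT (hsupp : ∀ i j (y : Fin 4 → ℝ),
      R ^ 2 ≤ (y 1) ^ 2 + (y 2) ^ 2 + (y 3) ^ 2 → T i j y = 0)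
    (hR : 0 ≤ R) (i j : Fin 4) (u : ℝ) :
    HasCompactSupport (fun y : E3 => T i j (nullPt n u y)) := by
  refine HasCompactSupport.intro (isCompact_closedBall 0 R) (fun y hy => ?_)
  have : R ≤ ‖y‖ := le_of_lt (by simpa [mem_closedBall, dist_zero_right, not_le] using hy)
  exact T_nullPt_zero hsupp hR i j u this

lemma hcsF (hsupp : ∀ i j (y : Fin 4 → ℝ),
      R ^ 2 ≤ (y 1) ^ 2 + (y 2) ^ 2 + (y 3) ^ 2 → T i j y = 0)
    (hR : 0 ≤ R) (i j : Fin 4) (u : ℝ) (v : Fin 4 → ℝ) :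
    HasCompactSupport (fun y : E3 => fderiv ℝ (T i j) (nullPt n u y) v) := by
  refine HasCompactSupport.intro (isCompact_closedBall 0 R) (fun y hy => ?_)
  have hlt : R < ‖y‖ := by simpa [mem_closedBall, dist_zero_right, not_le] using hy
  rw [fderiv_nullPt_zero hsupp hR i j u hlt]
  rfl

lemma contF (hTsmooth : ∀ i j, ContDiff ℝ (⊤ : ℕ∞) (T i j)) (i j : Fin 4) (u : ℝ)
    (v : Fin 4 → ℝ) :
    Continuous (fun y : E3 => fderiv ℝ (T i j) (nullPt n u y) v) := by
  have h1 : Continuous (fderiv ℝ (T i j)) :=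
    (hTsmooth i j).continuous_fderiv (by simp)
  exact (h1.comp (continuous_nullPt n u)).clm_apply continuous_const


lemma coord_le_norm (y : E3) (α : Fin 3) : |y α| ≤ ‖y‖ := by
  rw [EuclideanSpace.norm_eq]
  have h : |y α| ^ 2 ≤ ∑ i, ‖y i‖ ^ 2 := by
    have := Finset.single_le_sum (f := fun i => ‖y i‖ ^ 2)
      (fun i _ => by positivity) (Finset.mem_univ α)
    simpa [Real.norm_eq_abs] using this
  calc |y α| = Real.sqrt (|y α| ^ 2) := (Real.sqrt_sq (abs_nonneg _)).symm
    _ ≤ _ := Real.sqrt_le_sqrt h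

lemma hasDerivAt_integral (hTsmooth : ∀ i j, ContDiff ℝ (⊤ : ℕ∞) (T i j))
    (hsupp : ∀ i j (y : Fin 4 → ℝ),
      R ^ 2 ≤ (y 1) ^ 2 + (y 2) ^ 2 + (y 3) ^ 2 → T i j y = 0)
    (hR : 0 < R) (hn : ‖n‖ = 1) (i j : Fin 4) (u₀ : ℝ) :
    HasDerivAt (fun u => ∫ y : E3, T i j (nullPt n u y))
      (∫ y : E3, fderiv ℝ (T i j) (nullPt n u₀ y) (Pi.single 0 1 : Fin 4 → ℝ)) u₀ := by
  obtain ⟨M, hM⟩ :=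
    (isCompact_closedBall (0 : Fin 4 → ℝ) (|u₀| + 1 + R)).exists_bound_of_continuousOn
      (((hTsmooth i j).continuous_fderiv (by simp)).continuousOn)
  refine (hasDerivAt_integral_of_dominated_loc_of_deriv_le
    (F := fun u (y : E3) => T i j (nullPt n u y))
    (F' := fun u (y : E3) => fderiv ℝ (T i j) (nullPt n u y) (Pi.single 0 1 : Fin 4 → ℝ))
    (bound := (closedBall (0:E3) R).indicator fun _ => M) (ball_mem_nhds u₀ one_pos) ?_ ?_ ?_ ?_ ?_ ?_).2
  · exact Filter.Eventually.of_forall fun u =>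
      (((hTsmooth i j).continuous).comp (continuous_nullPt n u)).aestronglyMeasurable
  · exact (((hTsmooth i j).continuous).comp
      (continuous_nullPt n u₀)).integrable_of_hasCompactSupport (hcsT hsupp hR.le i j u₀)
  · exact (contF hTsmooth i j u₀ _).aestronglyMeasurable
  · refine Filter.Eventually.of_forall fun y u hu => ?_
    by_cases hy : ‖y‖ ≤ R
    · rw [Set.indicator_of_mem (mem_closedBall_zero_iff.2 hy)]
      have hu' : |u| ≤ |u₀| + 1 := by
        have h1 := abs_sub_abs_le_abs_sub u u₀
        have hd : |u - u₀| < 1 := by simpa [Real.dist_eq] using (mem_ball.1 hu)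
        linarith
      have hiy : |∑ α, n α * y α| ≤ R := by
        have h2 := inner_bound n y
        rw [hn, one_mul] at h2
        linarith
      have hy0 : ∀ α : Fin 3, |y α| ≤ R := fun α => (coord_le_norm y α).trans hy
      have h0 : (0:ℝ) ≤ |u₀| + 1 := by positivity
      have hpt : nullPt n u y ∈ closedBall (0 : Fin 4 → ℝ) (|u₀| + 1 + R) := by
        rw [mem_closedBall_zero_iff]
        refine (pi_norm_le_iff_of_nonneg (by positivity)).2 fun l => ?_
        fin_cases l
        · show ‖nullPt n u y 0‖ ≤ |u₀| + 1 + R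
          have e : nullPt n u y 0 = u + ∑ α, n α * y α := by simp [nullPt]
          rw [e, Real.norm_eq_abs]
          have := abs_add_le u (∑ α, n α * y α)
          linarith
        · show ‖nullPt n u y 1‖ ≤ |u₀| + 1 + R
          have e : nullPt n u y 1 = y 0 := by simp [nullPt]
          rw [e, Real.norm_eq_abs]
          have := hy0 0
          linarith
        · show ‖nullPt n u y 2‖ ≤ |u₀| + 1 + R
          have e : nullPt n u y 2 = y 1 := by simp [nullPt]
          rw [e, Real.norm_eq_abs]
          have := hy0 1
          linarith
        · show ‖nullPt n u y 3‖ ≤ |u₀| + 1 + R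
          have e : nullPt n u y 3 = y 2 := by simp [nullPt]
          rw [e, Real.norm_eq_abs]
          have := hy0 2
          linarith
      calc ‖fderiv ℝ (T i j) (nullPt n u y) (Pi.single 0 1 : Fin 4 → ℝ)‖
          ≤ ‖fderiv ℝ (T i j) (nullPt n u y)‖ * ‖(Pi.single 0 1 : Fin 4 → ℝ)‖ :=
            ContinuousLinearMap.le_opNorm _ _
        _ = ‖fderiv ℝ (T i j) (nullPt n u y)‖ := by rw [Pi.norm_single]; simp
        _ ≤ M := hM _ hpt
    · rw [Set.indicator_of_notMem (by simpa [mem_closedBall_zero_iff] using hy)]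
      show ‖fderiv ℝ (T i j) (nullPt n u y) (Pi.single 0 1 : Fin 4 → ℝ)‖ ≤ 0
      rw [fderiv_nullPt_zero hsupp hR.le i j u (lt_of_not_ge hy)]
      simp
  · rw [integrable_indicator_iff measurableSet_closedBall]
    exact integrableOn_const measure_closedBall_lt_top.ne
  · refine Filter.Eventually.of_forall fun y u hu => ?_
    exact HasFDerivAt.comp_hasDerivAt u
      ((((hTsmooth i j).differentiable (by simp)) _).hasFDerivAt)
      (hasDerivAt_nullPt_u n y u)


lemma intFderivComp (hTsmooth : ∀ i j, ContDiff ℝ (⊤ : ℕ∞) (T i j))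
    (hsupp : ∀ i j (y : Fin 4 → ℝ),
      R ^ 2 ≤ (y 1) ^ 2 + (y 2) ^ 2 + (y 3) ^ 2 → T i j y = 0)
    (hR : 0 < R) (i j : Fin 4) (u : ℝ) (w : E3) :
    Integrable (fun y : E3 => fderiv ℝ (fun y : E3 => T i j (nullPt n u y)) y w) volume := by
  have hHc : ContDiff ℝ (⊤:ℕ∞) (fun y : E3 => T i j (nullPt n u y)) :=
    (hTsmooth i j).comp (contDiff_nullPt n u)
  have hHsupp : HasCompactSupport (fun y : E3 => T i j (nullPt n u y)) :=
    hcsT hsupp hR.le i j u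
  apply Continuous.integrable_of_hasCompactSupport
  · exact (hHc.continuous_fderiv (by simp)).clm_apply continuous_const
  · exact (hHsupp.fderiv ℝ).comp_left (g := fun L : E3 →L[ℝ] ℝ => L w) rfl

lemma integral_div_zero (hTsmooth : ∀ i j, ContDiff ℝ (⊤ : ℕ∞) (T i j))
    (hsupp : ∀ i j (y : Fin 4 → ℝ),
      R ^ 2 ≤ (y 1) ^ 2 + (y 2) ^ 2 + (y 3) ^ 2 → T i j y = 0)
    (hR : 0 < R) (i j : Fin 4) (u : ℝ) (w : E3) :
    ∫ y : E3, fderiv ℝ (fun y : E3 => T i j (nullPt n u y)) y w = 0 := by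
  have hHc : ContDiff ℝ (⊤:ℕ∞) (fun y : E3 => T i j (nullPt n u y)) :=
    (hTsmooth i j).comp (contDiff_nullPt n u)
  have hHdiff : Differentiable ℝ (fun y : E3 => T i j (nullPt n u y)) :=
    hHc.differentiable (by simp)
  have hHsupp : HasCompactSupport (fun y : E3 => T i j (nullPt n u y)) :=
    hcsT hsupp hR.le i j u
  have h := integral_mul_fderiv_eq_neg_fderiv_mul_of_integrable
    (μ := (volume : Measure E3))
    (f := fun _ : E3 => (1:ℝ)) (g := fun y : E3 => T i j (nullPt n u y)) (v := w)
    ?_ ?_ ?_ (fun x _ => differentiableAt_const 1) (fun x _ => hHdiff x)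
  · simpa [fderiv_const] using h
  · have : (fun x : E3 => fderiv ℝ (fun _ : E3 => (1:ℝ)) x w * T i j (nullPt n u x))
        = fun _ => 0 := by
      funext x; simp [fderiv_const]
    rw [this]; exact integrable_zero _ _ _
  · simpa [one_mul] using intFderivComp hTsmooth hsupp hR i j u w
  · simpa [one_mul] using
      (hHc.continuous.integrable_of_hasCompactSupport hHsupp)

lemma lo_kvec (n : E3) : lo (kvec n) = ![-1, n 0, n 1, n 2] := by
  funext j
  fin_cases j <;> simp [lo, eta, kvec, Fin.sum_univ_four]

lemma fderiv_comp_single (hTsmooth : ∀ i j, ContDiff ℝ (⊤ : ℕ∞) (T i j))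
    (i j : Fin 4) (u : ℝ) (y : E3) (α : Fin 3) :
    fderiv ℝ (fun y : E3 => T i j (nullPt n u y)) y (EuclideanSpace.single α 1)
      = n α * fderiv ℝ (T i j) (nullPt n u y) (Pi.single 0 1 : Fin 4 → ℝ)
        + fderiv ℝ (T i j) (nullPt n u y) (Pi.single α.succ 1 : Fin 4 → ℝ) := by
  have hcomp : HasFDerivAt (fun y : E3 => T i j (nullPt n u y))
      ((fderiv ℝ (T i j) (nullPt n u y)).comp (L n)) y :=
    ((((hTsmooth i j).differentiable (by simp)) _).hasFDerivAt).comp y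
      (hasFDerivAt_nullPt n u y)
  rw [hcomp.fderiv]
  rw [ContinuousLinearMap.comp_apply, L_single, map_add, _root_.map_smul]
  simp [smul_eq_mul]

lemma pointwise_key (hTsmooth : ∀ i j, ContDiff ℝ (⊤ : ℕ∞) (T i j))
    (hTcons : ∀ i y, ∑ j, fderiv ℝ (T i j) y (Pi.single j 1) = 0)
    (i : Fin 4) (u : ℝ) (y : E3) :
    ∑ j, lo (kvec n) j * fderiv ℝ (T i j) (nullPt n u y) (Pi.single 0 1 : Fin 4 → ℝ)
      = ∑ α : Fin 3,
          fderiv ℝ (fun y : E3 => T i (α.succ) (nullPt n u y)) y (EuclideanSpace.single α 1) := by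
  have hcons := hTcons i (nullPt n u y)
  rw [Fin.sum_univ_four] at hcons
  rw [Fin.sum_univ_four, Fin.sum_univ_three]
  rw [fderiv_comp_single hTsmooth, fderiv_comp_single hTsmooth, fderiv_comp_single hTsmooth]
  rw [lo_kvec]
  have hs0 : (0 : Fin 3).succ = (1 : Fin 4) := rfl
  have hs1 : (1 : Fin 3).succ = (2 : Fin 4) := rfl
  have hs2 : (2 : Fin 3).succ = (3 : Fin 4) := rfl
  rw [hs0, hs1, hs2]
  simp only [Matrix.cons_val_zero, Matrix.cons_val_one, Matrix.head_cons,
    Matrix.cons_val_two, Matrix.tail_cons, Matrix.cons_val_three]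
  linarith


lemma key (hTsmooth : ∀ i j, ContDiff ℝ (⊤ : ℕ∞) (T i j))
    (hTcons : ∀ i y, ∑ j, fderiv ℝ (T i j) y (Pi.single j 1) = 0)
    (hsupp : ∀ i j (y : Fin 4 → ℝ),
      R ^ 2 ≤ (y 1) ^ 2 + (y 2) ^ 2 + (y 3) ^ 2 → T i j y = 0)
    (hR : 0 < R) (i : Fin 4) (u : ℝ) :
    ∑ j, lo (kvec n) j *
        (∫ y : E3, fderiv ℝ (T i j) (nullPt n u y) (Pi.single 0 1 : Fin 4 → ℝ)) = 0 := by
  have h1 : ∀ j : Fin 4, lo (kvec n) j *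
      (∫ y : E3, fderiv ℝ (T i j) (nullPt n u y) (Pi.single 0 1 : Fin 4 → ℝ))
      = ∫ y : E3, lo (kvec n) j * fderiv ℝ (T i j) (nullPt n u y) (Pi.single 0 1 : Fin 4 → ℝ) :=
    fun j => (integral_const_mul _ _).symm
  rw [Finset.sum_congr rfl fun j _ => h1 j, ← integral_finset_sum]
  · calc ∫ y : E3, ∑ j, lo (kvec n) j *
            fderiv ℝ (T i j) (nullPt n u y) (Pi.single 0 1 : Fin 4 → ℝ)
        = ∫ y : E3, ∑ α : Fin 3,
            fderiv ℝ (fun y : E3 => T i (α.succ) (nullPt n u y)) y (EuclideanSpace.single α 1) := by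
          congr 1; funext y; exact pointwise_key hTsmooth hTcons i u y
      _ = ∑ α : Fin 3, ∫ y : E3,
            fderiv ℝ (fun y : E3 => T i (α.succ) (nullPt n u y)) y (EuclideanSpace.single α 1) :=
          integral_finset_sum _ (fun α _ => intFderivComp hTsmooth hsupp hR i α.succ u _)
      _ = 0 := by
          rw [Finset.sum_congr rfl fun α _ => integral_div_zero hTsmooth hsupp hR i α.succ u _]
          simp
  · intro j _
    exact ((contF hTsmooth i j u _).integrable_of_hasCompactSupport
      (hcsF hsupp hR.le i j u _)).const_mul _

end MonopoleProof

open MonopoleProof in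
/-- Monopole conservation equation: `k_j (d/du)𝒯^{ij}(u) = 0`, i.e. the
contracted retarded monopole moment `k_j 𝒯^{ij}` is constant in retarded
time. -/
theorem monopole_conservation
    (T : Fin 4 → Fin 4 → (Fin 4 → ℝ) → ℝ)
    (hTsmooth : ∀ i j, ContDiff ℝ (⊤ : ℕ∞) (T i j))
    (hTsymm : ∀ i j y, T i j y = T j i y)
    (hTcons : ∀ i y, ∑ j, fderiv ℝ (T i j) y (Pi.single j 1) = 0)
    (R : ℝ) (hR : 0 < R)
    (hsupp : ∀ i j (y : Fin 4 → ℝ),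
      R ^ 2 ≤ (y 1) ^ 2 + (y 2) ^ 2 + (y 3) ^ 2 → T i j y = 0)
    (n : EuclideanSpace ℝ (Fin 3)) (hn : ‖n‖ = 1) :
    ∀ i : Fin 4,
      (∀ u u' : ℝ, ∑ j, lo (kvec n) j * monopole T n i j u
          = ∑ j, lo (kvec n) j * monopole T n i j u') ∧
      (∀ u : ℝ, ∑ j, lo (kvec n) j * deriv (fun s => monopole T n i j s) u = 0) := by
  intro i
  have hder : ∀ (j : Fin 4) (u : ℝ),
      HasDerivAt (fun s => monopole T n i j s)
        (∫ y : EuclideanSpace ℝ (Fin 3),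
          fderiv ℝ (T i j) (nullPt n u y) (Pi.single 0 1 : Fin 4 → ℝ)) u :=
    fun j u => hasDerivAt_integral hTsmooth hsupp hR hn i j u
  have hkey : ∀ u : ℝ, ∑ j, lo (kvec n) j *
      (∫ y : EuclideanSpace ℝ (Fin 3),
        fderiv ℝ (T i j) (nullPt n u y) (Pi.single 0 1 : Fin 4 → ℝ)) = 0 :=
    fun u => key hTsmooth hTcons hsupp hR i u
  refine ⟨?_, ?_⟩
  · intro u u'
    have hG : ∀ u : ℝ, HasDerivAt (fun s => ∑ j, lo (kvec n) j * monopole T n i j s)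
        (∑ j, lo (kvec n) j * ∫ y : EuclideanSpace ℝ (Fin 3),
          fderiv ℝ (T i j) (nullPt n u y) (Pi.single 0 1 : Fin 4 → ℝ)) u :=
      fun u => HasDerivAt.fun_sum fun j _ => (hder j u).const_mul _
    exact is_const_of_deriv_eq_zero (fun u => (hG u).differentiableAt)
      (fun u => by rw [(hG u).deriv]; exact hkey u) u u'
  · intro u
    have hd : ∀ j : Fin 4, deriv (fun s => monopole T n i j s) u
        = ∫ y : EuclideanSpace ℝ (Fin 3),
            fderiv ℝ (T i j) (nullPt n u y) (Pi.single 0 1 : Fin 4 → ℝ) :=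
      fun j => (hder j u).deriv
    rw [Finset.sum_congr rfl fun j _ => by rw [hd j]]
    exact hkey u
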